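/- Let A be a commutative ring with a multi-center {[M_i, a_i]}_{i∈I}, let K ⊆ I, and suppose that for every i ∈ I \ K there exists k(i) ∈ K with a_{k(i)} ∈ M_i + (a_i) and M_i + (a_i) ⊆ M_{k(i)} + (a_{k(i)}). For i ∈ I \ K, the fraction t_i = λ_K(a_i)·λ_K(a_{k(i)})⁻¹ lies in the dilatation A' := A[{M_k/a_k}_{k∈K}] ⊆ S_K⁻¹A (since a_i ∈ M_{k(i)} + (a_{k(i)})). Then the canonical A-algebra homomorphism A' → A[{M_i/a_i}_{i∈I}] (induced by the localization map S_K⁻¹A → S_I⁻¹A) exhibits the full dilatation A[{M_i/a_i}_{i∈I}] as the localization of A' at the multiplicative submonoid of A' generated by the elements {t_i : i ∈ I \ K}. -/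

import Mathlib

set_option maxHeartbeats 1000000
set_option synthInstance.maxHeartbeats 1000000

/-- The dilatation `A[{M_i/a_i}_{i ∈ K}]` of a commutative ring `A` with multi-center
`{[M_i, a_i]}` restricted to a subset `K` of the index set, realized as the
sub-`A`-algebra of `S_K⁻¹A` (where `S_K` is the submonoid generated by `{a_i : i ∈ K}`)
generated by the fractions `λ_K(m)·λ_K(a_i)⁻¹` for `i ∈ K` and `m ∈ M_i`. -/
noncomputable def dilatationOn {A : Type*} [CommRing A] {I : Type*}
    (M : I → Ideal A) (a : I → A) (K : Set I) :
    Subalgebra A (Localization (Submonoid.closure (a '' K))) :=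
  Algebra.adjoin A {x | ∃ i ∈ K, ∃ m ∈ M i,
    x = algebraMap A (Localization (Submonoid.closure (a '' K))) m *
        Ring.inverse (algebraMap A (Localization (Submonoid.closure (a '' K))) (a i))}

lemma closure_image_le_comap {A : Type*} [CommRing A] {I : Type*} (a : I → A)
    {K L : Set I} (h : K ⊆ L) :
    Submonoid.closure (a '' K) ≤ (Submonoid.closure (a '' L)).comap (RingHom.id A) := by
  rw [Submonoid.closure_le]
  rintro x ⟨i, hi, rfl⟩
  exact Submonoid.mem_comap.mpr (Submonoid.subset_closure ⟨i, h hi, rfl⟩)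

/-- The canonical `A`-algebra homomorphism `A[{M_i/a_i}_{i ∈ K}] → A[{M_i/a_i}_{i ∈ I}]`
induced by the localization map `S_K⁻¹A → S_I⁻¹A` (which carries the `K`-dilatation into
the `I`-dilatation). -/
noncomputable def dilatationOnMap {A : Type*} [CommRing A] {I : Type*}
    (M : I → Ideal A) (a : I → A) (K : Set I)
    (hmaps : ∀ x ∈ dilatationOn M a K,
      IsLocalization.map (Localization (Submonoid.closure (a '' (Set.univ : Set I))))
        (RingHom.id A) (closure_image_le_comap a (Set.subset_univ K)) x ∈
          dilatationOn M a Set.univ) :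
    dilatationOn M a K →+* dilatationOn M a Set.univ :=
  RingHom.codRestrict
    ((IsLocalization.map (Localization (Submonoid.closure (a '' (Set.univ : Set I))))
        (RingHom.id A) (closure_image_le_comap a (Set.subset_univ K))).comp
      (dilatationOn M a K).val.toRingHom)
    (dilatationOn M a Set.univ)
    (fun x => hmaps ↑x x.2)

section auxiliary
variable {A : Type*} [CommRing A] {I : Type*} (M : I → Ideal A) (a : I → A)

lemma aux_isUnit {K : Set I} {j : I} (hj : j ∈ K) :
    IsUnit (algebraMap A (Localization (Submonoid.closure (a '' K))) (a j)) :=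
  IsLocalization.map_units _ (⟨a j, Submonoid.subset_closure ⟨j, hj, rfl⟩⟩ :
    Submonoid.closure (a '' K))

lemma aux_map_inverse {R S : Type*} [CommRing R] [CommRing S] (f : R →+* S) {x : R}
    (h : IsUnit x) : f (Ring.inverse x) = Ring.inverse (f x) := by
  obtain ⟨u, rfl⟩ := h
  rw [Ring.inverse_unit, show f ↑u = ↑(Units.map (f : R →* S) u) from rfl, Ring.inverse_unit]
  exact (Units.coe_map_inv _ u).symm

lemma aux_mem {K : Set I} {j : I} (hj : j ∈ K) {b : A}
    (hb : b ∈ M j + Ideal.span {a j}) :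
    algebraMap A (Localization (Submonoid.closure (a '' K))) b *
      Ring.inverse (algebraMap A (Localization (Submonoid.closure (a '' K))) (a j)) ∈
      dilatationOn M a K := by
  rw [Submodule.add_eq_sup, Submodule.mem_sup] at hb
  obtain ⟨m, hm, z, hz, rfl⟩ := hb
  obtain ⟨c, rfl⟩ := Ideal.mem_span_singleton'.mp hz
  rw [map_add, add_mul]
  refine add_mem (Algebra.subset_adjoin ⟨j, hj, m, hm, rfl⟩) ?_
  rw [map_mul, mul_assoc, Ring.mul_inverse_cancel _ (aux_isUnit a hj), mul_one]
  exact (dilatationOn M a K).algebraMap_mem c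

lemma aux_factor {K : Set I} (kmap : I → I)
    (hk : ∀ i ∉ K, kmap i ∈ K ∧ a (kmap i) ∈ M i + Ideal.span {a i} ∧
      M i + Ideal.span {a i} ≤ M (kmap i) + Ideal.span {a (kmap i)})
    (l : List A) (hl : ∀ b ∈ l, ∃ i, a i = b) :
    ∃ (t : dilatationOn M a K) (u : Localization (Submonoid.closure (a '' K))),
      t ∈ Submonoid.closure {t : dilatationOn M a K | ∃ i ∉ K,
        (t : Localization (Submonoid.closure (a '' K))) =
          algebraMap A (Localization (Submonoid.closure (a '' K))) (a i) *
            Ring.inverse (algebraMap A (Localization (Submonoid.closure (a '' K)))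
              (a (kmap i)))} ∧ IsUnit u ∧
      algebraMap A (Localization (Submonoid.closure (a '' K))) l.prod = ↑t * u := by
  induction l with
  | nil => exact ⟨1, 1, one_mem _, isUnit_one, by simp⟩
  | cons b l ih =>
    obtain ⟨t, u, ht, hu, heq⟩ := ih (fun x hx => hl x (List.mem_cons_of_mem b hx))
    obtain ⟨i, rfl⟩ := hl b List.mem_cons_self
    by_cases hi : i ∈ K
    · refine ⟨t, algebraMap A _ (a i) * u, ht, (aux_isUnit a hi).mul hu, ?_⟩
      rw [List.prod_cons, map_mul, heq]; ring
    · have hmem : a i ∈ M (kmap i) + Ideal.span {a (kmap i)} := by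
        refine (hk i hi).2.2 ?_
        rw [Submodule.add_eq_sup]
        exact Submodule.mem_sup_right (Ideal.mem_span_singleton_self _)
      refine ⟨⟨_, aux_mem M a (hk i hi).1 hmem⟩ * t,
        algebraMap A _ (a (kmap i)) * u,
        mul_mem (Submonoid.subset_closure ⟨i, hi, rfl⟩) ht,
        (aux_isUnit a (hk i hi).1).mul hu, ?_⟩
      rw [List.prod_cons, map_mul, heq, MulMemClass.coe_mul]
      have h1 := Ring.inverse_mul_cancel _ (aux_isUnit a (hk i hi).1)
      linear_combination (-(algebraMap A (Localization (Submonoid.closure (a '' K))) (a i) *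
        ↑t * u)) * h1

end auxiliary

/-- If for every `i ∉ K` there is `k(i) ∈ K` with `a_{k(i)} ∈ M_i + (a_i)` and
`M_i + (a_i) ⊆ M_{k(i)} + (a_{k(i)})`, then the canonical map
`A[{M_k/a_k}_{k ∈ K}] → A[{M_i/a_i}_{i ∈ I}]` exhibits the full dilatation as the
localization of `A[{M_k/a_k}_{k ∈ K}]` at the submonoid generated by the fractions
`t_i = λ_K(a_i)·λ_K(a_{k(i)})⁻¹`, `i ∉ K`. -/
theorem dilatationOn_isLocalization {A : Type*} [CommRing A] {I : Type*}
    (M : I → Ideal A) (a : I → A) (K : Set I) (kmap : I → I)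
    (hk : ∀ i ∉ K, kmap i ∈ K ∧ a (kmap i) ∈ M i + Ideal.span {a i} ∧
      M i + Ideal.span {a i} ≤ M (kmap i) + Ideal.span {a (kmap i)})
    (hmaps : ∀ x ∈ dilatationOn M a K,
      IsLocalization.map (Localization (Submonoid.closure (a '' (Set.univ : Set I))))
        (RingHom.id A) (closure_image_le_comap a (Set.subset_univ K)) x ∈
          dilatationOn M a Set.univ) :
    @IsLocalization (dilatationOn M a K) _
      (Submonoid.closure {t : dilatationOn M a K | ∃ i ∉ K,
        (t : Localization (Submonoid.closure (a '' K))) =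
          algebraMap A (Localization (Submonoid.closure (a '' K))) (a i) *
            Ring.inverse (algebraMap A (Localization (Submonoid.closure (a '' K)))
              (a (kmap i)))})
      (dilatationOn M a Set.univ) _ (dilatationOnMap M a K hmaps).toAlgebra := by
  letI : Algebra (dilatationOn M a K) (dilatationOn M a Set.univ) :=
    (dilatationOnMap M a K hmaps).toAlgebra
  set φ : Localization (Submonoid.closure (a '' K)) →+*
      Localization (Submonoid.closure (a '' (Set.univ : Set I))) :=
    IsLocalization.map (Localization (Submonoid.closure (a '' (Set.univ : Set I))))
      (RingHom.id A) (closure_image_le_comap a (Set.subset_univ K)) with hφdef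
  have hphi : ∀ r : A, φ (algebraMap A (Localization (Submonoid.closure (a '' K))) r) =
      algebraMap A (Localization (Submonoid.closure (a '' (Set.univ : Set I)))) r := fun r =>
    IsLocalization.map_eq _ r
  have hφinv : ∀ j ∈ K,
      φ (Ring.inverse (algebraMap A (Localization (Submonoid.closure (a '' K))) (a j))) =
      Ring.inverse (algebraMap A (Localization (Submonoid.closure (a '' (Set.univ : Set I))))
        (a j)) :=
    fun j hj => by rw [aux_map_inverse _ (aux_isUnit a hj), hphi]
  have hcoe : ∀ x : dilatationOn M a K,
      ((dilatationOnMap M a K hmaps x : dilatationOn M a Set.univ) :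
        Localization (Submonoid.closure (a '' (Set.univ : Set I)))) = φ ↑x := fun _ => rfl
  constructor
  constructor
  · -- map_units
    rintro ⟨y, hy⟩
    rw [RingHom.algebraMap_toAlgebra]
    induction hy using Submonoid.closure_induction with
    | mem t htmem =>
      obtain ⟨i, hi, hteq⟩ := htmem
      refine IsUnit.of_mul_eq_one ⟨_, aux_mem M a (Set.mem_univ i) (hk i hi).2.1⟩
        (Subtype.ext ?_)
      push_cast
      rw [hcoe, hteq, map_mul, hphi, hφinv _ (hk i hi).1]
      have e1 := Ring.mul_inverse_cancel _ (aux_isUnit a (Set.mem_univ i))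
      have e2 := Ring.inverse_mul_cancel _ (aux_isUnit a (Set.mem_univ (kmap i)))
      linear_combination (Ring.inverse (algebraMap A (Localization (Submonoid.closure
        (a '' (Set.univ : Set I)))) (a (kmap i))) * algebraMap A (Localization
        (Submonoid.closure (a '' (Set.univ : Set I)))) (a (kmap i))) * e1 + e2
    | one => rw [map_one]; exact isUnit_one
    | mul x y hx hy ihx ihy => rw [map_mul]; exact ihx.mul ihy
  · -- surj
    intro z
    have key : ∀ x ∈ dilatationOn M a Set.univ,
        ∃ t w : dilatationOn M a K,
          t ∈ Submonoid.closure {t : dilatationOn M a K | ∃ i ∉ K,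
            (t : Localization (Submonoid.closure (a '' K))) =
              algebraMap A (Localization (Submonoid.closure (a '' K))) (a i) *
                Ring.inverse (algebraMap A (Localization (Submonoid.closure (a '' K)))
                  (a (kmap i)))} ∧ x * φ ↑t = φ ↑w := by
      intro x hx
      induction hx using Algebra.adjoin_induction with
      | mem x hxs =>
        obtain ⟨i, -, m, hm, rfl⟩ := hxs
        by_cases hi : i ∈ K
        · refine ⟨1, ⟨_, Algebra.subset_adjoin ⟨i, hi, m, hm, rfl⟩⟩, one_mem _, ?_⟩
          push_cast
          rw [map_one, mul_one, map_mul, hphi, hφinv _ hi]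
        · have h1 : a i ∈ M (kmap i) + Ideal.span {a (kmap i)} := by
            refine (hk i hi).2.2 ?_
            rw [Submodule.add_eq_sup]
            exact Submodule.mem_sup_right (Ideal.mem_span_singleton_self _)
          have h2 : m ∈ M (kmap i) + Ideal.span {a (kmap i)} := by
            refine (hk i hi).2.2 ?_
            rw [Submodule.add_eq_sup]
            exact Submodule.mem_sup_left hm
          refine ⟨⟨_, aux_mem M a (hk i hi).1 h1⟩, ⟨_, aux_mem M a (hk i hi).1 h2⟩,
            Submonoid.subset_closure ⟨i, hi, rfl⟩, ?_⟩
          rw [Subtype.coe_mk, Subtype.coe_mk, map_mul, map_mul, hphi, hphi,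
            hφinv _ (hk i hi).1]
          have e1 := Ring.inverse_mul_cancel _ (aux_isUnit a (Set.mem_univ i))
          linear_combination (algebraMap A (Localization (Submonoid.closure
            (a '' (Set.univ : Set I)))) m * Ring.inverse (algebraMap A (Localization
            (Submonoid.closure (a '' (Set.univ : Set I)))) (a (kmap i)))) * e1
      | algebraMap r =>
        refine ⟨1, ⟨_, (dilatationOn M a K).algebraMap_mem r⟩, one_mem _, ?_⟩
        push_cast
        rw [map_one, mul_one, hphi]
      | add x y hx hy ihx ihy =>
        obtain ⟨tx, wx, htx, hex⟩ := ihx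
        obtain ⟨ty, wy, hty, hey⟩ := ihy
        refine ⟨tx * ty, wx * ty + wy * tx, mul_mem htx hty, ?_⟩
        push_cast
        rw [map_mul, map_add, map_mul, map_mul]
        linear_combination (φ ↑ty) * hex + (φ ↑tx) * hey
      | mul x y hx hy ihx ihy =>
        obtain ⟨tx, wx, htx, hex⟩ := ihx
        obtain ⟨ty, wy, hty, hey⟩ := ihy
        refine ⟨tx * ty, wx * wy, mul_mem htx hty, ?_⟩
        push_cast
        rw [map_mul, map_mul]
        linear_combination (y * φ ↑ty) * hex + (φ ↑wx) * hey
    obtain ⟨t, w, ht, he⟩ := key ↑z z.2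
    refine ⟨⟨w, ⟨t, ht⟩⟩, Subtype.ext ?_⟩
    rw [RingHom.algebraMap_toAlgebra]
    push_cast
    rw [hcoe, hcoe]
    exact he
  · -- exists_of_eq
    intro x y h
    rw [RingHom.algebraMap_toAlgebra] at h
    have h' : φ ↑x = φ ↑y := by
      rw [← hcoe, ← hcoe, h]
    obtain ⟨⟨r, s⟩, hr⟩ := IsLocalization.surj (Submonoid.closure (a '' K))
      (x : Localization (Submonoid.closure (a '' K)))
    obtain ⟨⟨r', s'⟩, hr'⟩ := IsLocalization.surj (Submonoid.closure (a '' K))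
      (y : Localization (Submonoid.closure (a '' K)))
    have hx1 : φ ↑x * algebraMap A (Localization (Submonoid.closure
        (a '' (Set.univ : Set I)))) ↑s = algebraMap A _ r := by
      rw [← hphi, ← hphi, ← map_mul, hr]
    have hy1 : φ ↑y * algebraMap A (Localization (Submonoid.closure
        (a '' (Set.univ : Set I)))) ↑s' = algebraMap A _ r' := by
      rw [← hphi, ← hphi, ← map_mul, hr']
    have key : algebraMap A (Localization (Submonoid.closure (a '' (Set.univ : Set I))))
        (r * ↑s') = algebraMap A _ (r' * ↑s) := by
      rw [map_mul, map_mul]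
      linear_combination (-(algebraMap A (Localization (Submonoid.closure
          (a '' (Set.univ : Set I)))) ↑s')) * hx1 +
        (algebraMap A (Localization (Submonoid.closure (a '' (Set.univ : Set I)))) ↑s) * hy1 +
        (algebraMap A (Localization (Submonoid.closure (a '' (Set.univ : Set I)))) ↑s *
          algebraMap A (Localization (Submonoid.closure (a '' (Set.univ : Set I)))) ↑s') * h'
    obtain ⟨c, hc⟩ := (IsLocalization.eq_iff_exists (Submonoid.closure
      (a '' (Set.univ : Set I))) (Localization (Submonoid.closure
      (a '' (Set.univ : Set I))))).mp key
    obtain ⟨l, hl, hprod⟩ := Submonoid.exists_list_of_mem_closure c.2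
    obtain ⟨t, u, ht, hu, heq⟩ := aux_factor M a kmap hk l
      (fun b hb => by obtain ⟨i, -, hi⟩ := hl b hb; exact ⟨i, hi⟩)
    have hc' : algebraMap A (Localization (Submonoid.closure (a '' K))) (↑c * (r * ↑s')) =
        algebraMap A (Localization (Submonoid.closure (a '' K))) (↑c * (r' * ↑s)) :=
      congrArg _ hc
    rw [← hprod] at hc'
    simp only [map_mul] at hc'
    rw [heq] at hc'
    have hus : IsUnit (u * (algebraMap A (Localization (Submonoid.closure (a '' K))) ↑s *
        algebraMap A (Localization (Submonoid.closure (a '' K))) ↑s')) :=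
      hu.mul ((IsLocalization.map_units _ s).mul (IsLocalization.map_units _ s'))
    have big2 : (u * (algebraMap A (Localization (Submonoid.closure (a '' K))) ↑s *
        algebraMap A (Localization (Submonoid.closure (a '' K))) ↑s')) * (↑t * ↑x) =
        (u * (algebraMap A (Localization (Submonoid.closure (a '' K))) ↑s *
        algebraMap A (Localization (Submonoid.closure (a '' K))) ↑s')) * (↑t * ↑y) := by
      linear_combination (↑t * u * algebraMap A (Localization (Submonoid.closure (a '' K))) ↑s' :
          Localization (Submonoid.closure (a '' K))) * hr -
        (↑t * u * algebraMap A (Localization (Submonoid.closure (a '' K))) ↑s :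
          Localization (Submonoid.closure (a '' K))) * hr' + hc'
    have hfin : (↑t : Localization (Submonoid.closure (a '' K))) * ↑x = ↑t * ↑y :=
      hus.mul_left_cancel big2
    exact ⟨⟨t, ht⟩, Subtype.ext (by push_cast; exact hfin)⟩
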